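/- The linearly ordered set Ṡ, consisting of all infinite external addresses together with all intermediate external addresses of length at least 2, equipped with the lexicographic order, is order-isomorphic to the real line ℝ; in particular, it is a densely ordered, Dedekind-complete linear order without greatest or least element. -/

import Mathlib

noncomputable section

/-- Entries of an address: a real number or `∞`. -/
abbrev Entry : Type := WithTop ℝ

/-- An address is a sequence of entries. -/
abbrev Addr : Type := ℕ → Entry

/-- The address `∞` (all of whose entries are infinite). -/
def topAddr : Addr := fun _ => ⊤

/-- The shift map `σ`, deleting the first entry. -/
def shift (a : Addr) : Addr := fun k => a (k + 1)

/-- The iterated shift `σ^k`. -/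
def shiftIter (a : Addr) (k : ℕ) : Addr := fun j => a (j + k)

/-- `σ^k(a)` is defined (all earlier iterates differ from `∞`). -/
def shiftDef (a : Addr) (k : ℕ) : Prop := ∀ j, j < k → shiftIter a j ≠ topAddr

/-- Prepending an entry to an address. -/
def consAddr (x : Entry) (a : Addr) : Addr := fun k => if k = 0 then x else a (k - 1)

/-- The lexicographic (strict) order on addresses. -/
def addrLt (a b : Addr) : Prop := ∃ k, (∀ j, j < k → a j = b j) ∧ a k < b k

/-- The lexicographic order on addresses. -/
def addrLe (a b : Addr) : Prop := addrLt a b ∨ a = b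

/-- Infinite external addresses: all entries are integers. -/
def IsExtAddr (a : Addr) : Prop := ∀ k, ∃ m : ℤ, a k = ((m : ℝ) : Entry)

/-- Intermediate external addresses of length `n ≥ 1`: the first `n - 2` entries are
integers, the `(n-1)`-st entry lies in `ℤ + 1/2`, and all further entries are `∞`
(for `n = 1` this is the address `∞` itself). -/
def IsIntermediate (a : Addr) (n : ℕ) : Prop :=
  1 ≤ n ∧ (∀ k, k + 2 < n → ∃ m : ℤ, a k = ((m : ℝ) : Entry)) ∧
    (∀ k, k + 2 = n → ∃ m : ℤ, a k = (((m : ℝ) + 1 / 2 : ℝ) : Entry)) ∧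
    (∀ k, n ≤ k + 1 → a k = ⊤)

/-- Membership in `Ṡ`: infinite external addresses and intermediate ones of length `≥ 2`. -/
def InSDot (a : Addr) : Prop := IsExtAddr a ∨ ∃ n, 2 ≤ n ∧ IsIntermediate a n

/-- Membership in `S̄ = Ṡ ∪ {∞}`. -/
def InSBar (a : Addr) : Prop := InSDot a ∨ a = topAddr

/-- `a` is periodic of (exact) period `n`. -/
def PeriodicAddr (a : Addr) (n : ℕ) : Prop :=
  1 ≤ n ∧ shiftIter a n = a ∧ ∀ m, 1 ≤ m → m < n → shiftIter a m ≠ a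

/-- Itinerary entries: integers `j`, boundary symbols `[j/(j-1)]` (encoded `bdy j`),
or the symbol `*`. -/
inductive ItinEntry : Type
  | int : ℤ → ItinEntry
  | bdy : ℤ → ItinEntry
  | star : ItinEntry
  deriving DecidableEq

open scoped Classical in
/-- The itinerary `itin_s(r)`; position `k` holds the entry `u_{k+1}` of the paper:
`u_{k+1} = j` if `js < σ^k(r) < (j+1)s`, the boundary symbol `[j/(j-1)]` if `σ^k(r) = js`,
and `*` if `σ^k(r) = ∞`. -/
def itin (s r : Addr) : ℕ → ItinEntry := fun k =>
  if shiftIter r k = topAddr then ItinEntry.star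
  else if h : ∃ j : ℤ, shiftIter r k = consAddr ((j : ℝ) : Entry) s then ItinEntry.bdy h.choose
  else if h : ∃ j : ℤ, addrLt (consAddr ((j : ℝ) : Entry) s) (shiftIter r k) ∧
      addrLt (shiftIter r k) (consAddr (((j + 1 : ℤ) : ℝ) : Entry) s) then ItinEntry.int h.choose
  else ItinEntry.star

/-- Replace each boundary symbol `[j/(j-1)]` by `j`. -/
def entryPlus : ItinEntry → ItinEntry
  | ItinEntry.bdy j => ItinEntry.int j
  | e => e

/-- Replace each boundary symbol `[j/(j-1)]` by `j - 1`. -/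
def entryMinus : ItinEntry → ItinEntry
  | ItinEntry.bdy j => ItinEntry.int (j - 1)
  | e => e

/-- The itinerary `itin⁺_s(r)`. -/
def itinPlus (s r : Addr) : ℕ → ItinEntry := fun k => entryPlus (itin s r k)

/-- The itinerary `itin⁻_s(r)`. -/
def itinMinus (s r : Addr) : ℕ → ItinEntry := fun k => entryMinus (itin s r k)

/-- The periodic itinerary `(u_1 … u_n)^∞` (with `u_i` encoded as `u (i - 1)`). -/
def perItin (u : ℕ → ℤ) (n : ℕ) : ℕ → ItinEntry := fun k => ItinEntry.int (u (k % n))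

/-- The finite itinerary word `u_1 … u_{n-1} *` (star from position `n - 1` onwards). -/
def finWord (u : ℕ → ℤ) (n : ℕ) : ℕ → ItinEntry := fun k =>
  if k + 1 < n then ItinEntry.int (u k) else ItinEntry.star

/-- A combinatorial characteristic ray pair of period `n` with itinerary `(u_1 … u_n)^∞`. -/
def CharRayPair (rm rp : Addr) (n : ℕ) (u : ℕ → ℤ) : Prop :=
  IsExtAddr rm ∧ IsExtAddr rp ∧ PeriodicAddr rm n ∧ PeriodicAddr rp n ∧ addrLt rm rp ∧
    (∀ k, 1 ≤ k → ¬(addrLt rm (shiftIter rm k) ∧ addrLt (shiftIter rm k) rp)) ∧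
    (∀ k, 1 ≤ k → ¬(addrLt rm (shiftIter rp k) ∧ addrLt (shiftIter rp k) rp)) ∧
    itinMinus rm rm = perItin u n ∧ itinMinus rm rp = perItin u n ∧
    addrLt (shiftIter rp (n - 1)) (shiftIter rm (n - 1))



section Aux

/-- An order isomorphism ℝ → (-1/2, 1/2). -/
def t (x : ℝ) : ℝ := x / (2 * (1 + |x|))

lemma t_zero : t 0 = 0 := by simp [t]

lemma abs_t_lt (x : ℝ) : |t x| < 1/2 := by
  have h : (0:ℝ) < 2 * (1 + |x|) := by positivity
  rw [t, abs_div, abs_of_pos h, div_lt_iff₀ h]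
  nlinarith [abs_nonneg x]

lemma abs_t_le (x : ℝ) : |t x| ≤ 1/2 := (abs_t_lt x).le

lemma t_strictMono : StrictMono t := by
  intro x y hxy
  have hx : (0:ℝ) < 2 * (1 + |x|) := by positivity
  have hy : (0:ℝ) < 2 * (1 + |y|) := by positivity
  rw [t, t, div_lt_div_iff₀ hx hy]
  rcases abs_cases x with ⟨hx1, _⟩ | ⟨hx1, _⟩ <;>
    rcases abs_cases y with ⟨hy1, _⟩ | ⟨hy1, _⟩ <;> rw [hx1, hy1] <;> nlinarith

lemma t_lip (x y : ℝ) : |t x - t y| ≤ (1/2) * |x - y| := by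
  wlog h : y ≤ x with H
  · have := H y x (le_of_not_ge h)
    rw [abs_sub_comm (t y), abs_sub_comm y x] at this
    exact this
  have hmono : t y ≤ t x := by
    rcases eq_or_lt_of_le h with rfl | h'
    · exact le_rfl
    · exact (t_strictMono h').le
  rw [abs_of_nonneg (sub_nonneg.2 hmono), abs_of_nonneg (sub_nonneg.2 h)]
  have hx : (0:ℝ) < 2 * (1 + |x|) := by positivity
  have hy : (0:ℝ) < 2 * (1 + |y|) := by positivity
  rw [t, t, div_sub_div _ _ (ne_of_gt hx) (ne_of_gt hy)]
  rw [div_le_iff₀ (by positivity)]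
  have hd : 0 ≤ x - y := sub_nonneg.2 h
  rcases abs_cases x with ⟨hx1, hx2⟩ | ⟨hx1, hx2⟩ <;>
    rcases abs_cases y with ⟨hy1, hy2⟩ | ⟨hy1, hy2⟩ <;> rw [hx1, hy1]
  · nlinarith [mul_nonneg hx2 hy2, mul_nonneg (mul_nonneg hx2 hy2) hd]
  · -- x ≥ 0, y < 0
    have hv : 0 ≤ -y := by linarith
    nlinarith [sq_nonneg (x + y), mul_nonneg hx2 hv, mul_nonneg (mul_nonneg hx2 hv) hd]
  · -- x < 0, y ≥ 0 : impossible-ish but x - y ≥ 0 forces x ≥ y ≥ 0, so x = y = 0 edge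
    have hx0 : x < 0 := hx2
    have : (0:ℝ) ≤ x := le_trans hy2 h
    linarith
  · have hu : 0 ≤ -x := by linarith
    have hv : 0 ≤ -y := by linarith
    nlinarith [mul_nonneg hu hv, mul_nonneg (mul_nonneg hu hv) hd]

def tinv (y : ℝ) : ℝ := 2 * y / (1 - 2 * |y|)

lemma t_tinv {y : ℝ} (hy : |y| < 1/2) : t (tinv y) = y := by
  have hc : (0:ℝ) < 1 - 2 * |y| := by linarith
  have habs : |tinv y| = 2 * |y| / (1 - 2 * |y|) := by
    rw [tinv, abs_div, abs_of_pos hc, abs_mul, abs_two]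
  rw [t, habs, tinv]
  have h1 : 1 + 2 * |y| / (1 - 2 * |y|) = 1 / (1 - 2*|y|) := by
    field_simp
    ring
  rw [h1]
  field_simp

open Filter Topology

/-- Finite approximations to the evaluation map. -/
def fapp : ℕ → Addr → ℝ
  | 0, _ => 0
  | n+1, a => (a 0).untopD 0 + (if a 1 = ⊤ then 0 else t (fapp n (shift a)))

lemma fapp_diff (n : ℕ) (a : Addr) :
    |fapp (n+2) a - fapp (n+1) a| ≤ (1/2)^(n+1) := by
  induction n generalizing a with
  | zero =>
    by_cases h : a 1 = ⊤
    · simp [fapp, h]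
    · have : fapp 2 a - fapp 1 a = t (fapp 1 (shift a)) - t (fapp 0 (shift a)) := by
        simp [fapp, h]
      rw [this]
      have h0 : fapp 0 (shift a) = 0 := rfl
      rw [h0, t_zero, sub_zero]
      simpa using abs_t_le (fapp 1 (shift a))
  | succ n ih =>
    by_cases h : a 1 = ⊤
    · simp [fapp, h]
    · have : fapp (n+3) a - fapp (n+2) a
          = t (fapp (n+2) (shift a)) - t (fapp (n+1) (shift a)) := by
        simp [fapp, h]
      rw [this]
      calc |t (fapp (n+2) (shift a)) - t (fapp (n+1) (shift a))|
          ≤ (1/2) * |fapp (n+2) (shift a) - fapp (n+1) (shift a)| := t_lip _ _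
        _ ≤ (1/2) * (1/2)^(n+1) := by
            have := ih (shift a)
            linarith
        _ = (1/2)^(n+2) := by ring

lemma fapp_cauchy (a : Addr) : CauchySeq (fun n => fapp n a) := by
  apply cauchySeq_of_le_geometric (1/2) (max |fapp 1 a| 1) (by norm_num)
  intro n
  match n with
  | 0 =>
    simp only [pow_zero, mul_one]
    have : fapp 0 a = 0 := rfl
    rw [Real.dist_eq, this, zero_sub, abs_neg]
    exact le_max_left _ _
  | (m+1) =>
    rw [Real.dist_eq, abs_sub_comm]
    calc |fapp (m+2) a - fapp (m+1) a| ≤ (1/2)^(m+1) := fapp_diff m a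
      _ = 1 * (1/2)^(m+1) := (one_mul _).symm
      _ ≤ max |fapp 1 a| 1 * (1/2)^(m+1) := by
          apply mul_le_mul_of_nonneg_right (le_max_right _ _)
          positivity

/-- The evaluation map `Ṡ → ℝ`. -/
def phi (a : Addr) : ℝ := limUnder atTop (fun n => fapp n a)

lemma phi_tendsto (a : Addr) : Tendsto (fun n => fapp n a) atTop (𝓝 (phi a)) :=
  (fapp_cauchy a).tendsto_limUnder

lemma tendsto_t {u : ℕ → ℝ} {L : ℝ} (h : Tendsto u atTop (𝓝 L)) :
    Tendsto (fun n => t (u n)) atTop (𝓝 (t L)) := by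
  rw [tendsto_iff_dist_tendsto_zero] at h ⊢
  apply squeeze_zero (fun n => dist_nonneg)
    (g := fun n => (1/2) * dist (u n) L)
  · intro n
    rw [Real.dist_eq, Real.dist_eq]
    exact t_lip _ _
  · simpa using h.const_mul (1/2 : ℝ)

lemma phi_rec (a : Addr) :
    phi a = (a 0).untopD 0 + (if a 1 = ⊤ then 0 else t (phi (shift a))) := by
  have h1 : Tendsto (fun n => fapp (n+1) a) atTop (𝓝 (phi a)) :=
    (phi_tendsto a).comp (tendsto_add_atTop_nat 1)
  have h2 : Tendsto (fun n => fapp (n+1) a) atTop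
      (𝓝 ((a 0).untopD 0 + (if a 1 = ⊤ then 0 else t (phi (shift a))))) := by
    have : (fun n => fapp (n+1) a)
        = fun n => (a 0).untopD 0 + (if a 1 = ⊤ then 0 else t (fapp n (shift a))) := by
      funext n; rfl
    rw [this]
    apply Tendsto.const_add
    by_cases h : a 1 = ⊤
    · simp [h]
    · simp only [h, if_false]
      exact tendsto_t (phi_tendsto (shift a))
  exact tendsto_nhds_unique h1 h2

lemma phi_of_terminal {a : Addr} {x : ℝ} (h0 : a 0 = (x : Entry)) (h1 : a 1 = ⊤) :
    phi a = x := by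
  rw [phi_rec, h0, if_pos h1]
  simp [WithTop.untopD]

lemma phi_lt_add_half {a : Addr} {x : ℝ} (h0 : a 0 = (x : Entry)) :
    phi a < x + 1/2 := by
  rw [phi_rec, h0]
  by_cases h : a 1 = ⊤
  · rw [if_pos h]; simp [WithTop.untopD]
  · rw [if_neg h]
    have := abs_t_lt (phi (shift a))
    have h2 := abs_lt.1 this
    simp only [WithTop.untopD]
    simp
    linarith [h2.2]

lemma sub_half_lt_phi {a : Addr} {x : ℝ} (h0 : a 0 = (x : Entry)) :
    x - 1/2 < phi a := by
  rw [phi_rec, h0]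
  by_cases h : a 1 = ⊤
  · rw [if_pos h]; simp [WithTop.untopD]
  · rw [if_neg h]
    have h2 := abs_lt.1 (abs_t_lt (phi (shift a)))
    simp only [WithTop.untopD]
    simp
    linarith [h2.1]

-- half-integer casts are not integer casts
lemma int_ne_half (m m' : ℤ) : ((m : ℝ) : Entry) ≠ (((m' : ℝ) + 1/2 : ℝ) : Entry) := by
  intro h
  rw [WithTop.coe_inj] at h
  have : (2 * m : ℝ) = 2 * m' + 1 := by push_cast; linarith
  have h2 : (2 * m : ℤ) = 2 * m' + 1 := by exact_mod_cast this
  omega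

/-- S1: first entry of a member of Ṡ is not ⊤. -/
lemma sdot_zero_ne_top {a : Addr} (ha : InSDot a) : a 0 ≠ ⊤ := by
  rcases ha with h | ⟨n, hn, _, hint, hhalf, htop⟩
  · obtain ⟨m, hm⟩ := h 0
    rw [hm]; exact WithTop.coe_ne_top
  · rcases Nat.lt_or_ge (0 + 2) n with h2 | h2
    · obtain ⟨m, hm⟩ := hint 0 h2
      rw [hm]; exact WithTop.coe_ne_top
    · have : 0 + 2 = n := by omega
      obtain ⟨m, hm⟩ := hhalf 0 this
      rw [hm]; exact WithTop.coe_ne_top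

/-- S2: grid structure of entries. -/
lemma sdot_grid {a : Addr} (ha : InSDot a) (k : ℕ) :
    a k = ⊤ ∨ (∃ m : ℤ, a k = ((m : ℝ) : Entry)) ∨
      (∃ m : ℤ, a k = (((m : ℝ) + 1/2 : ℝ) : Entry)) := by
  rcases ha with h | ⟨n, hn, _, hint, hhalf, htop⟩
  · exact Or.inr (Or.inl (h k))
  · rcases Nat.lt_or_ge (k + 2) n with h2 | h2
    · exact Or.inr (Or.inl (hint k h2))
    · rcases Nat.eq_or_lt_of_le h2 with h3 | h3
      · exact Or.inr (Or.inr (hhalf k h3.symm))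
      · exact Or.inl (htop k (by omega))

/-- S3: a half-integer entry is terminal. -/
lemma sdot_half_terminal {a : Addr} (ha : InSDot a) {k : ℕ} {m : ℤ}
    (h : a k = (((m : ℝ) + 1/2 : ℝ) : Entry)) : a (k+1) = ⊤ := by
  rcases ha with hext | ⟨n, hn, _, hint, hhalf, htop⟩
  · obtain ⟨m', hm'⟩ := hext k
    exact absurd (hm'.symm.trans h) (int_ne_half m' m)
  · rcases Nat.lt_or_ge (k + 2) n with h2 | h2
    · obtain ⟨m', hm'⟩ := hint k h2
      exact absurd (hm'.symm.trans h) (int_ne_half m' m)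
    · rcases Nat.eq_or_lt_of_le h2 with h3 | h3
      · exact htop (k+1) (by omega)
      · rw [htop k (by omega)] at h
        exact absurd h.symm WithTop.coe_ne_top

/-- S4: ⊤ entries persist. -/
lemma sdot_top_closed {a : Addr} (ha : InSDot a) {k : ℕ} (h : a k = ⊤) :
    a (k+1) = ⊤ := by
  rcases ha with hext | ⟨n, hn, _, hint, hhalf, htop⟩
  · obtain ⟨m', hm'⟩ := hext k
    rw [hm'] at h; exact absurd h WithTop.coe_ne_top
  · rcases Nat.lt_or_ge (k + 2) n with h2 | h2
    · obtain ⟨m', hm'⟩ := hint k h2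
      rw [hm'] at h; exact absurd h WithTop.coe_ne_top
    · rcases Nat.eq_or_lt_of_le h2 with h3 | h3
      · obtain ⟨m', hm'⟩ := hhalf k h3.symm
        rw [hm'] at h; exact absurd h WithTop.coe_ne_top
      · exact htop (k+1) (by omega)

/-- S7: an entry just before a ⊤ entry is ⊤ or a half-integer. -/
lemma sdot_before_top {a : Addr} (ha : InSDot a) {k : ℕ} (h : a (k+1) = ⊤) :
    a k = ⊤ ∨ ∃ m : ℤ, a k = (((m : ℝ) + 1/2 : ℝ) : Entry) := by
  rcases sdot_grid ha k with h0 | h0 | h0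
  · exact Or.inl h0
  · exfalso
    obtain ⟨m, hm⟩ := h0
    rcases ha with hext | ⟨n, hn, _, hint, hhalf, htop⟩
    · obtain ⟨m', hm'⟩ := hext (k+1)
      rw [hm'] at h; exact WithTop.coe_ne_top h
    · -- a (k+1) = ⊤ means n ≤ k + 2; a k integer means k + 2 < n or contradiction
      rcases Nat.lt_or_ge (k + 2) n with h2 | h2
      · -- then n ≤ k+2 needed: from a(k+1) = ⊤, not direct; get from htop? a(k+1)=⊤:
        -- k+3 < n would give integer at k+1, contra; k+3 = n gives half, contra;
        rcases Nat.lt_or_ge (k + 3) n with h3 | h3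
        · obtain ⟨m', hm'⟩ := hint (k+1) h3
          rw [hm'] at h; exact WithTop.coe_ne_top h
        · rcases Nat.eq_or_lt_of_le h3 with h4 | h4
          · obtain ⟨m', hm'⟩ := hhalf (k+1) h4.symm
            rw [hm'] at h; exact WithTop.coe_ne_top h
          · omega
      · rcases Nat.eq_or_lt_of_le h2 with h3 | h3
        · obtain ⟨m', hm'⟩ := hhalf k h3.symm
          exact int_ne_half m m' (hm.symm.trans hm')
        · rw [htop k (by omega)] at hm
          exact WithTop.coe_ne_top hm.symm
  · exact Or.inr h0

/-- ⊤-closedness as a plain property. -/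
def TopClosed (a : Addr) : Prop := ∀ k, a k = ⊤ → a (k+1) = ⊤

lemma topClosed_shift {a : Addr} (h : TopClosed a) : TopClosed (shift a) :=
  fun k hk => h (k+1) hk

lemma topClosed_mono {a : Addr} (h : TopClosed a) {j k : ℕ} (hjk : j ≤ k)
    (hj : a j = ⊤) : a k = ⊤ := by
  induction k with
  | zero => have : j = 0 := Nat.le_zero.1 hjk; rwa [this] at hj
  | succ k ih =>
    rcases Nat.lt_or_ge j (k+1) with h2 | h2
    · exact h k (ih (by omega))
    · have : j = k + 1 := by omega
      rwa [this] at hj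

lemma shiftIter_zero (a : Addr) : shiftIter a 0 = a := rfl

lemma shiftIter_shift (a : Addr) (k : ℕ) :
    shiftIter (shift a) k = shiftIter a (k+1) := rfl

lemma shiftIter_app (a : Addr) (k j : ℕ) : shiftIter a k j = a (j + k) := rfl

/-- Propagation of strict inequality down a common prefix. -/
lemma phi_prop : ∀ (k : ℕ) (a b : Addr), TopClosed a → TopClosed b →
    (∀ j, j < k → a j = b j) → a k ≠ ⊤ → b k ≠ ⊤ →
    phi (shiftIter a k) < phi (shiftIter b k) → phi a < phi b := by
  intro k
  induction k with
  | zero => intro a b _ _ _ _ _ h; exact h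
  | succ k ih =>
    intro a b hA hB hpre hak hbk hlt
    have ha1 : a 1 ≠ ⊤ := fun h1 => hak (topClosed_mono hA (by omega) h1)
    have hb1 : b 1 ≠ ⊤ := fun h1 => hbk (topClosed_mono hB (by omega) h1)
    have h0 : a 0 = b 0 := hpre 0 (by omega)
    have key : phi (shift a) < phi (shift b) := by
      apply ih (shift a) (shift b) (topClosed_shift hA) (topClosed_shift hB)
      · intro j hj
        exact hpre (j+1) (by omega)
      · exact hak
      · exact hbk
      · exact hlt
    rw [phi_rec a, phi_rec b, if_neg ha1, if_neg hb1, h0]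
    exact add_lt_add_right (t_strictMono key) _

lemma sdot_topClosed {a : Addr} (ha : InSDot a) : TopClosed a :=
  fun _ h => sdot_top_closed ha h

/-- Core inequality at the first differing entry, plus the whole monotonicity. -/
theorem phi_mono {a b : Addr} (ha : InSDot a) (hb : InSDot b) (hab : addrLt a b) :
    phi a < phi b := by
  obtain ⟨k, hpre, hlt⟩ := hab
  have hak : a k ≠ ⊤ := fun h => by rw [h] at hlt; exact (not_top_lt) hlt
  -- b k ≠ ⊤
  have hbk : b k ≠ ⊤ := by
    intro hbtop
    match k, hpre, hlt, hbtop with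
    | 0, _, _, hbtop => exact sdot_zero_ne_top hb hbtop
    | (j+1), hpre, hlt, hbtop =>
      have hj : a j = b j := hpre j (by omega)
      rcases sdot_before_top hb hbtop with h1 | ⟨m, h1⟩
      · exact hak (by
          have : a j = ⊤ := by rw [hj, h1]
          exact topClosed_mono (sdot_topClosed ha) (by omega) this)
      · have : a j = (((m : ℝ) + 1/2 : ℝ) : Entry) := by rw [hj, h1]
        exact hak (sdot_half_terminal ha this)
  -- extract real values and grid forms
  have hIa0 : shiftIter a k 0 = a k := by
    show a (0 + k) = a k
    rw [Nat.zero_add]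
  have hIb0 : shiftIter b k 0 = b k := by
    show b (0 + k) = b k
    rw [Nat.zero_add]
  have hIa1 : shiftIter a k 1 = a (k+1) := by
    show a (1 + k) = a (k+1)
    rw [Nat.add_comm]
  have hIb1 : shiftIter b k 1 = b (k+1) := by
    show b (1 + k) = b (k+1)
    rw [Nat.add_comm]
  have core : phi (shiftIter a k) < phi (shiftIter b k) := by
    rcases sdot_grid ha k with h1 | ⟨m, hma⟩ | ⟨m, hma⟩
    · exact absurd h1 hak
    all_goals rcases sdot_grid hb k with h2 | ⟨m', hmb⟩ | ⟨m', hmb⟩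
    · exact absurd h2 hbk
    · -- int / int
      have hmm : m < m' := by
        rw [hma, hmb, WithTop.coe_lt_coe] at hlt
        exact_mod_cast hlt
      have h3 : phi (shiftIter a k) < (m:ℝ) + 1/2 :=
        phi_lt_add_half (by rw [hIa0, hma])
      have h4 : (m':ℝ) - 1/2 < phi (shiftIter b k) :=
        sub_half_lt_phi (by rw [hIb0, hmb])
      have : (m:ℝ) + 1 ≤ (m':ℝ) := by exact_mod_cast hmm
      linarith
    · -- int / half
      have hmm : (m:ℝ) < (m':ℝ) + 1/2 := by
        rw [hma, hmb, WithTop.coe_lt_coe] at hlt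
        exact hlt
      have hmm' : m ≤ m' := by
        by_contra hcon
        push_neg at hcon
        have : (m':ℝ) + 1 ≤ m := by exact_mod_cast hcon
        linarith
      have h3 : phi (shiftIter a k) < (m:ℝ) + 1/2 :=
        phi_lt_add_half (by rw [hIa0, hma])
      have h4 : phi (shiftIter b k) = (m':ℝ) + 1/2 := by
        apply phi_of_terminal (x := (m':ℝ) + 1/2) (by rw [hIb0, hmb])
        rw [hIb1]
        exact sdot_half_terminal hb hmb
      have : (m:ℝ) ≤ (m':ℝ) := by exact_mod_cast hmm'
      linarith
    · exact absurd h2 hbk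
    · -- half / int
      have hmm : (m:ℝ) + 1/2 < (m':ℝ) := by
        rw [hma, hmb, WithTop.coe_lt_coe] at hlt
        exact hlt
      have hmm' : m + 1 ≤ m' := by
        by_contra hcon
        push_neg at hcon
        have : (m':ℝ) ≤ m := by exact_mod_cast (by omega : m' ≤ m)
        linarith
      have h3 : phi (shiftIter a k) = (m:ℝ) + 1/2 := by
        apply phi_of_terminal (x := (m:ℝ) + 1/2) (by rw [hIa0, hma])
        rw [hIa1]
        exact sdot_half_terminal ha hma
      have h4 : (m':ℝ) - 1/2 < phi (shiftIter b k) :=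
        sub_half_lt_phi (by rw [hIb0, hmb])
      have : (m:ℝ) + 1 ≤ (m':ℝ) := by exact_mod_cast hmm'
      linarith
    · -- half / half
      have hmm : (m:ℝ) + 1/2 < (m':ℝ) + 1/2 := by
        rw [hma, hmb, WithTop.coe_lt_coe] at hlt
        exact hlt
      have h3 : phi (shiftIter a k) = (m:ℝ) + 1/2 := by
        apply phi_of_terminal (x := (m:ℝ) + 1/2) (by rw [hIa0, hma])
        rw [hIa1]
        exact sdot_half_terminal ha hma
      have h4 : phi (shiftIter b k) = (m':ℝ) + 1/2 := by
        apply phi_of_terminal (x := (m':ℝ) + 1/2) (by rw [hIb0, hmb])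
        rw [hIb1]
        exact sdot_half_terminal hb hmb
      linarith
  exact phi_prop k a b (sdot_topClosed ha) (sdot_topClosed hb) hpre hak hbk core

/-- `x` is a half-integer. -/
def IsHalf (x : ℝ) : Prop := ∃ m : ℤ, x = (m : ℝ) + 1/2

open scoped Classical in
/-- One step of the digit-extraction dynamics. -/
def nxt : WithTop ℝ → WithTop ℝ
  | ⊤ => ⊤
  | (x : ℝ) => if IsHalf x then ⊤ else ((tinv (x - round x) : ℝ) : WithTop ℝ)

open scoped Classical in
/-- The entry generated by a state. -/
def ent : WithTop ℝ → Entry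
  | ⊤ => ⊤
  | (x : ℝ) => if IsHalf x then (x : Entry) else (((round x : ℤ) : ℝ) : Entry)

/-- The state sequence starting from `x`. -/
def st (x : ℝ) : ℕ → WithTop ℝ
  | 0 => (x : WithTop ℝ)
  | k+1 => nxt (st x k)

/-- The address assigned to `x`. -/
def addrOf (x : ℝ) : Addr := fun k => ent (st x k)

lemma nxt_top : nxt ⊤ = ⊤ := rfl
lemma ent_top : ent ⊤ = ⊤ := rfl

open scoped Classical in
lemma nxt_coe (x : ℝ) :
    nxt (x : WithTop ℝ) = if IsHalf x then ⊤ else ((tinv (x - round x) : ℝ) : WithTop ℝ) := rfl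

open scoped Classical in
lemma ent_coe (x : ℝ) :
    ent (x : WithTop ℝ) = if IsHalf x then (x : Entry) else (((round x : ℤ) : ℝ) : Entry) := rfl

lemma ent_coe_ne_top (x : ℝ) : ent (x : WithTop ℝ) ≠ ⊤ := by
  rw [ent_coe]
  split_ifs <;> exact WithTop.coe_ne_top

lemma round_strict {x : ℝ} (h : ¬ IsHalf x) : |x - round x| < 1/2 := by
  rcases eq_or_lt_of_le (abs_sub_round x) with he | hl
  · exfalso
    rcases (abs_eq (by norm_num : (0:ℝ) ≤ 1/2)).1 he with h1 | h1
    · exact h ⟨round x, by linarith⟩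
    · exact h ⟨round x - 1, by push_cast; linarith⟩
  · exact hl

lemma st_not_half {x : ℝ} (h : ¬ IsHalf x) (k : ℕ) :
    st x (k+1) = st (tinv (x - round x)) k := by
  induction k with
  | zero =>
    show nxt (x : WithTop ℝ) = _
    rw [nxt_coe, if_neg h]
    rfl
  | succ k ih =>
    show nxt (st x (k+1)) = nxt (st (tinv (x - round x)) k)
    rw [ih]

lemma shift_addrOf {x : ℝ} (h : ¬ IsHalf x) :
    shift (addrOf x) = addrOf (tinv (x - round x)) := by
  funext k
  show ent (st x (k+1)) = ent (st (tinv (x - round x)) k)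
  rw [st_not_half h]

lemma addrOf_zero (x : ℝ) : addrOf x 0 = ent (x : WithTop ℝ) := rfl

lemma addrOf_one_ne_top {x : ℝ} (h : ¬ IsHalf x) : addrOf x 1 ≠ ⊤ := by
  show ent (st x 1) ≠ ⊤
  have : st x 1 = ((tinv (x - round x) : ℝ) : WithTop ℝ) := by
    show nxt (x : WithTop ℝ) = _
    rw [nxt_coe, if_neg h]
  rw [this]
  exact ent_coe_ne_top _

lemma phi_addrOf_half {x : ℝ} (h : IsHalf x) : phi (addrOf x) = x := by
  apply phi_of_terminal (x := x)
  · rw [addrOf_zero, ent_coe, if_pos h]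
  · show ent (st x 1) = ⊤
    have : st x 1 = ⊤ := by
      show nxt (x : WithTop ℝ) = ⊤
      rw [nxt_coe, if_pos h]
    rw [this, ent_top]

lemma phi_addrOf_bound (x : ℝ) : |phi (addrOf x) - x| ≤ 1 := by
  by_cases h : IsHalf x
  · rw [phi_addrOf_half h]
    simp
  · have h0 : addrOf x 0 = (((round x : ℤ) : ℝ) : Entry) := by
      rw [addrOf_zero, ent_coe, if_neg h]
    have h1 := phi_lt_add_half h0
    have h2 := sub_half_lt_phi h0
    have h3 := round_strict h
    rw [abs_lt] at h3
    rw [abs_le]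
    constructor <;> linarith [h3.1, h3.2]

lemma phi_addrOf_geom : ∀ (n : ℕ) (x : ℝ), |phi (addrOf x) - x| ≤ (1/2)^n := by
  intro n
  induction n with
  | zero => intro x; simpa using phi_addrOf_bound x
  | succ n ih =>
    intro x
    by_cases h : IsHalf x
    · rw [phi_addrOf_half h]
      simp only [sub_self, abs_zero]
      positivity
    · set x' := tinv (x - round x) with hx'
      have hrec : phi (addrOf x) = ((round x : ℤ) : ℝ) + t (phi (addrOf x')) := by
        rw [phi_rec (addrOf x)]
        rw [addrOf_zero, ent_coe, if_neg h]
        rw [if_neg (addrOf_one_ne_top h), shift_addrOf h]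
        simp [WithTop.untopD]
        rfl
      have hx : x = ((round x : ℤ) : ℝ) + t x' := by
        rw [hx', t_tinv (round_strict h)]
        push_cast
        ring
      have : phi (addrOf x) - x = t (phi (addrOf x')) - t x' := by
        rw [hrec]
        nth_rewrite 2 [hx]
        ring
      rw [this]
      calc |t (phi (addrOf x')) - t x'| ≤ (1/2) * |phi (addrOf x') - x'| := t_lip _ _
        _ ≤ (1/2) * (1/2)^n := by linarith [ih x', abs_nonneg (phi (addrOf x') - x')]
        _ = (1/2)^(n+1) := by ring

lemma phi_addrOf (x : ℝ) : phi (addrOf x) = x := by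
  by_contra h
  have hd : 0 < |phi (addrOf x) - x| := abs_pos.2 (sub_ne_zero.2 h)
  obtain ⟨n, hn⟩ := exists_pow_lt_of_lt_one hd (by norm_num : (1:ℝ)/2 < 1)
  exact absurd (phi_addrOf_geom n x) (not_le.2 hn)


/-- Badness: the orbit has terminated or reached a half-integer. -/
def badState (x : ℝ) (k : ℕ) : Prop :=
  st x k = ⊤ ∨ ∃ y : ℝ, st x k = (y : WithTop ℝ) ∧ IsHalf y

lemma st_real_cases (z : WithTop ℝ) : z = ⊤ ∨ ∃ y : ℝ, z = (y : WithTop ℝ) := by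
  induction z using WithTop.recTopCoe with
  | top => exact Or.inl rfl
  | coe y => exact Or.inr ⟨y, rfl⟩

lemma good_entry {x : ℝ} {k : ℕ} (h : ¬ badState x k) :
    ∃ y : ℝ, st x k = (y : WithTop ℝ) ∧ ¬ IsHalf y ∧
      addrOf x k = (((round y : ℤ) : ℝ) : Entry) := by
  rcases st_real_cases (st x k) with h1 | ⟨y, h1⟩
  · exact absurd (Or.inl h1) h
  · refine ⟨y, h1, fun hh => h (Or.inr ⟨y, h1, hh⟩), ?_⟩
    show ent (st x k) = _
    rw [h1, ent_coe, if_neg (fun hh => h (Or.inr ⟨y, h1, hh⟩))]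

lemma st_top_mono {x : ℝ} {k : ℕ} (h : st x k = ⊤) {j : ℕ} (hkj : k ≤ j) :
    st x j = ⊤ := by
  induction j with
  | zero => rwa [Nat.le_zero.1 hkj] at h
  | succ j ih =>
    rcases Nat.lt_or_ge k (j+1) with h2 | h2
    · show nxt (st x j) = ⊤
      rw [ih (by omega), nxt_top]
    · rwa [(by omega : k = j + 1)] at h

lemma addrOf_mem (x : ℝ) : InSDot (addrOf x) := by
  classical
  by_cases hbad : ∃ k, badState x k
  · right
    obtain ⟨k, hk, hmin⟩ : ∃ k, badState x k ∧ ∀ j, j < k → ¬ badState x j :=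
      ⟨Nat.find hbad, Nat.find_spec hbad, fun j hj => Nat.find_min hbad hj⟩
    have hhalf : ∃ y : ℝ, st x k = (y : WithTop ℝ) ∧ IsHalf y := by
      match k, hk, hmin with
      | 0, hk, _ =>
        rcases hk with h1 | h1
        · exact absurd h1 WithTop.coe_ne_top
        · exact h1
      | (j+1), hk, hmin =>
        obtain ⟨y', hy', hnh', _⟩ := good_entry (hmin j (Nat.lt_succ_self j))
        have hst : st x (j+1) = ((tinv (y' - round y') : ℝ) : WithTop ℝ) := by
          show nxt (st x j) = _
          rw [hy', nxt_coe, if_neg hnh']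
        rcases hk with h1 | h1
        · rw [hst] at h1; exact absurd h1 WithTop.coe_ne_top
        · exact h1
    obtain ⟨y, hy, m, hm⟩ := hhalf
    have htop1 : st x (k+1) = ⊤ := by
      show nxt (st x k) = ⊤
      rw [hy, nxt_coe, if_pos ⟨m, hm⟩]
    refine ⟨k + 2, by omega, by omega, ?_, ?_, ?_⟩
    · intro j hj
      obtain ⟨y', _, _, he⟩ := good_entry (hmin j (by omega : j < k))
      exact ⟨round y', he⟩
    · intro j hj
      have hjk : j = k := by omega
      subst hjk
      refine ⟨m, ?_⟩
      show ent (st x j) = _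
      rw [hy, ent_coe, if_pos ⟨m, hm⟩, hm]
    · intro j hj
      show ent (st x j) = ⊤
      rw [st_top_mono htop1 (by omega), ent_top]
  · left
    intro k
    push_neg at hbad
    obtain ⟨y, _, _, he⟩ := good_entry (hbad k)
    exact ⟨round y, he⟩

/-- Trichotomy for the lexicographic order. -/
lemma addr_tri {a b : Addr} (hab : a ≠ b) : addrLt a b ∨ addrLt b a := by
  classical
  have hne : ∃ k, a k ≠ b k := by
    by_contra hc
    push_neg at hc
    exact hab (funext hc)
  set k := Nat.find hne with hk
  have hpre : ∀ j, j < k → a j = b j := fun j hj => by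
    have := Nat.find_min hne hj
    push_neg at this
    exact this
  rcases lt_or_gt_of_ne (Nat.find_spec hne) with h | h
  · exact Or.inl ⟨k, hpre, h⟩
  · exact Or.inr ⟨k, fun j hj => (hpre j hj).symm, h⟩

end Aux

/-- The linearly ordered set `Ṡ` with the lexicographic order is
order-isomorphic to the real line `ℝ`. -/
theorem stmt13 :
    Nonempty
      (RelIso (fun a b : {x : Addr // InSDot x} => addrLt a.1 b.1)
        ((· < ·) : ℝ → ℝ → Prop)) := by
  have hinj : Function.Injective (fun a : {x : Addr // InSDot x} => phi a.1) := by
    intro a b h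
    by_contra hne
    have hne' : a.1 ≠ b.1 := fun h' => hne (Subtype.ext h')
    rcases addr_tri hne' with hlt | hlt
    · exact absurd h (ne_of_lt (phi_mono a.2 b.2 hlt))
    · exact absurd h.symm (ne_of_lt (phi_mono b.2 a.2 hlt))
  have hsurj : Function.Surjective (fun a : {x : Addr // InSDot x} => phi a.1) :=
    fun x => ⟨⟨addrOf x, addrOf_mem x⟩, phi_addrOf x⟩
  let e := Equiv.ofBijective _ ⟨hinj, hsurj⟩
  refine ⟨⟨e, ?_⟩⟩
  intro a b
  show phi a.1 < phi b.1 ↔ addrLt a.1 b.1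
  constructor
  · intro h
    by_contra hlt
    have : a.1 = b.1 ∨ addrLt b.1 a.1 := by
      by_cases he : a.1 = b.1
      · exact Or.inl he
      · rcases addr_tri he with h1 | h1
        · exact absurd h1 hlt
        · exact Or.inr h1
    rcases this with he | h1
    · rw [he] at h; exact lt_irrefl _ h
    · exact lt_asymm h (phi_mono b.2 a.2 h1)
  · exact fun h => phi_mono a.2 b.2 h


end
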